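/- In the setting of the lifting lemma, each element g_i = m_i − nf_H(m_i) of the lifted basis satisfies in_{<'_ω}(g_i) = in_{<'_ω}(m_i); that is, the leading term of the lift equals the leading term of the corresponding generator of in_ω(I). -/
import Mathlib


open MvPolynomial

/-- A term ordering on the monomials (exponent vectors) of `k[x_1, …, x_n]`:
a strict total well-ordering compatible with addition of exponents. -/
structure TermOrder (n : ℕ) where
  lt : (Fin n →₀ ℕ) → (Fin n →₀ ℕ) → Prop
  irrefl : ∀ a, ¬ lt a a
  trans : ∀ a b c, lt a b → lt b c → lt a c
  trichotomous : ∀ a b, lt a b ∨ a = b ∨ lt b a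
  wf : WellFounded lt
  add_right : ∀ a b c, lt a b → lt (a + c) (b + c)

variable {n : ℕ}

/-- `α` is the exponent vector of the `t`-leading term of `f`. -/
def TermOrder.IsLeadExp {k : Type*} [CommSemiring k] (t : TermOrder n)
    (f : MvPolynomial (Fin n) k) (α : Fin n →₀ ℕ) : Prop :=
  α ∈ f.support ∧ ∀ β ∈ f.support, β ≠ α → t.lt β α

open Classical in
/-- The exponent vector of the `t`-leading term of `f` (junk value `0` if none exists). -/
noncomputable def TermOrder.leadExp {k : Type*} [CommSemiring k] (t : TermOrder n)
    (f : MvPolynomial (Fin n) k) : Fin n →₀ ℕ :=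
  if h : ∃ α, t.IsLeadExp f α then h.choose else 0

/-- The leading term `in_t(f)` of `f` with respect to the term ordering `t`. -/
noncomputable def TermOrder.leadTerm {k : Type*} [CommSemiring k] (t : TermOrder n)
    (f : MvPolynomial (Fin n) k) : MvPolynomial (Fin n) k :=
  monomial (t.leadExp f) (coeff (t.leadExp f) f)

/-- The initial ideal `in_t(I)` of `I` with respect to the term ordering `t`. -/
noncomputable def initialIdealT {k : Type*} [CommSemiring k] (t : TermOrder n)
    (I : Ideal (MvPolynomial (Fin n) k)) : Ideal (MvPolynomial (Fin n) k) :=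
  Ideal.span { p | ∃ f ∈ I, f ≠ 0 ∧ p = t.leadTerm f }

/-- The `ω`-weight `⟨ω, α⟩` of an exponent vector `α`. -/
noncomputable def wt (ω : Fin n → ℝ) (α : Fin n →₀ ℕ) : ℝ :=
  ∑ i, ω i * (α i : ℝ)

/-- The initial form `in_ω(f)`: the sum of the terms of `f` of maximal `ω`-weight. -/
noncomputable def initialForm {k : Type*} [CommSemiring k] (ω : Fin n → ℝ)
    (f : MvPolynomial (Fin n) k) : MvPolynomial (Fin n) k :=
  ∑ α ∈ f.support.filter (fun α => ∀ β ∈ f.support, wt ω β ≤ wt ω α),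
    monomial α (coeff α f)

/-- The generalized initial ideal `in_ω(I)` of `I` with respect to the weight vector `ω`. -/
noncomputable def initialIdealW {k : Type*} [CommSemiring k] (ω : Fin n → ℝ)
    (I : Ideal (MvPolynomial (Fin n) k)) : Ideal (MvPolynomial (Fin n) k) :=
  Ideal.span { p | ∃ f ∈ I, f ≠ 0 ∧ p = initialForm ω f }

/-- The refinement `<_ω` of the weight vector `ω` by the term ordering `t`:
compare first by `ω`-weight, break ties with `t`. -/
def refineLt (ω : Fin n → ℝ) (t : TermOrder n) (α β : Fin n →₀ ℕ) : Prop :=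
  wt ω α < wt ω β ∨ (wt ω α = wt ω β ∧ t.lt α β)

/-- `G` is a Gröbner basis of `I` w.r.t. `t`: `G ⊆ I` and the leading terms of the
elements of `G` generate the initial ideal `in_t(I)`. -/
def IsGroebnerBasis {k : Type*} [CommSemiring k] (t : TermOrder n)
    (I : Ideal (MvPolynomial (Fin n) k)) (G : Finset (MvPolynomial (Fin n) k)) : Prop :=
  (∀ g ∈ G, g ∈ I) ∧
    Ideal.span ((fun g => t.leadTerm g) '' (G : Set (MvPolynomial (Fin n) k)))
      = initialIdealT t I

open Classical in
/-- `G` is the reduced (marked) Gröbner basis of `I` w.r.t. `t`: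
a Gröbner basis that is minimal, monic and reduced. -/
def IsReducedGB {k : Type*} [CommSemiring k] (t : TermOrder n)
    (I : Ideal (MvPolynomial (Fin n) k)) (G : Finset (MvPolynomial (Fin n) k)) : Prop :=
  IsGroebnerBasis t I G ∧
  (∀ g ∈ G, coeff (t.leadExp g) g = 1) ∧
  (∀ g ∈ G, ∀ g' ∈ G, g ≠ g' → ∀ α ∈ g.support, ¬ t.leadExp g' ≤ α) ∧
  (∀ g ∈ G, ¬ IsGroebnerBasis t I (G.erase g))

section AuxDevelopment

open MvPolynomial

variable {n : ℕ} {k : Type*}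

/-- A finite nonempty set of exponents has a maximum w.r.t. a term order. -/
lemma TermOrder.exists_max (s : TermOrder n) (F : Finset (Fin n →₀ ℕ)) (hF : F.Nonempty) :
    ∃ α ∈ F, ∀ β ∈ F, β ≠ α → s.lt β α := by
  classical
  induction F using Finset.induction with
  | empty => exact absurd hF (by simp)
  | @insert a F' ha ih =>
    rcases F'.eq_empty_or_nonempty with h | h
    · subst h
      refine ⟨a, by simp, ?_⟩
      intro β hβ hne
      simp only [Finset.mem_insert, Finset.notMem_empty, or_false] at hβ
      exact absurd hβ hne
    · obtain ⟨α, hαF, hmax⟩ := ih h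
      rcases s.trichotomous a α with hlt | heq | hlt
      · refine ⟨α, Finset.mem_insert_of_mem hαF, ?_⟩
        intro β hβ hne
        rcases Finset.mem_insert.mp hβ with rfl | hβ
        · exact hlt
        · exact hmax β hβ hne
      · exact absurd (heq ▸ hαF) ha
      · refine ⟨a, Finset.mem_insert_self _ _, ?_⟩
        intro β hβ hne
        rcases Finset.mem_insert.mp hβ with rfl | hβ
        · exact absurd rfl hne
        · by_cases hβα : β = α
          · exact hβα ▸ hlt
          · exact s.trans _ _ _ (hmax β hβ hβα) hlt

lemma TermOrder.exists_isLeadExp [CommSemiring k] (s : TermOrder n)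
    {f : MvPolynomial (Fin n) k} (hf : f ≠ 0) : ∃ α, s.IsLeadExp f α := by
  obtain ⟨α, h1, h2⟩ := s.exists_max f.support
    (by rwa [Finset.nonempty_iff_ne_empty, Ne, MvPolynomial.support_eq_empty])
  exact ⟨α, h1, h2⟩

lemma TermOrder.isLeadExp_unique [CommSemiring k] (s : TermOrder n)
    {f : MvPolynomial (Fin n) k} {α β : Fin n →₀ ℕ}
    (hα : s.IsLeadExp f α) (hβ : s.IsLeadExp f β) : α = β := by
  by_contra hne
  exact s.irrefl α (s.trans _ _ _ (hβ.2 α hα.1 hne) (hα.2 β hβ.1 fun h => hne h.symm))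

lemma TermOrder.isLeadExp_leadExp [CommSemiring k] (s : TermOrder n)
    {f : MvPolynomial (Fin n) k} (hf : f ≠ 0) : s.IsLeadExp f (s.leadExp f) := by
  have h : ∃ α, s.IsLeadExp f α := s.exists_isLeadExp hf
  rw [TermOrder.leadExp, dif_pos h]
  exact h.choose_spec

lemma TermOrder.leadExp_eq [CommSemiring k] (s : TermOrder n)
    {f : MvPolynomial (Fin n) k} {α : Fin n →₀ ℕ}
    (h : s.IsLeadExp f α) : s.leadExp f = α := by
  have hf : f ≠ 0 := by
    rintro rfl
    simp [TermOrder.IsLeadExp] at h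
  exact s.isLeadExp_unique (s.isLeadExp_leadExp hf) h

lemma TermOrder.leadExp_mem_support_leadTerm [CommSemiring k] (s : TermOrder n)
    {f : MvPolynomial (Fin n) k} (hf : f ≠ 0) :
    s.leadExp f ∈ (s.leadTerm f).support := by
  simp only [TermOrder.leadTerm]
  rw [MvPolynomial.mem_support_iff, coeff_monomial, if_pos rfl]
  exact MvPolynomial.mem_support_iff.mp (s.isLeadExp_leadExp hf).1

lemma TermOrder.zero_lt (s : TermOrder n) {c : Fin n →₀ ℕ} (hc : c ≠ 0) : s.lt 0 c := by
  rcases s.trichotomous 0 c with h | h | h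
  · exact h
  · exact absurd h.symm hc
  · exfalso
    obtain ⟨m, hm, hmin⟩ := s.wf.has_min (Set.range fun j : ℕ => j • c) ⟨c, 1, one_smul _ _⟩
    obtain ⟨j, rfl⟩ := hm
    refine hmin ((j + 1) • c) ⟨j + 1, rfl⟩ ?_
    have h2 := s.add_right c 0 (j • c) h
    rw [zero_add] at h2
    rw [succ_nsmul, add_comm]
    exact h2

lemma wt_add (w : Fin n → ℝ) (a b : Fin n →₀ ℕ) : wt w (a + b) = wt w a + wt w b := by
  simp only [wt, Finsupp.add_apply, Nat.cast_add, mul_add, Finset.sum_add_distrib]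

lemma wt_nonneg {w : Fin n → ℝ} (hw : ∀ i, 0 ≤ w i) (a : Fin n →₀ ℕ) : 0 ≤ wt w a :=
  Finset.sum_nonneg fun i _ => mul_nonneg (hw i) (Nat.cast_nonneg _)

/-- Monotonicity of a weight refinement order w.r.t. divisibility of exponents. -/
lemma refine_le_imp {w : Fin n → ℝ} (hw : ∀ i, 0 ≤ w i) (s : TermOrder n)
    {a b : Fin n →₀ ℕ} (hab : a ≤ b) : a = b ∨ refineLt w s a b := by
  obtain ⟨c, rfl⟩ := exists_add_of_le hab
  rcases eq_or_ne c 0 with rfl | hc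
  · left; rw [add_zero]
  · right
    rcases (wt_nonneg hw c).lt_or_eq with h | h
    · left
      rw [wt_add]
      linarith
    · right
      constructor
      · rw [wt_add, ← h, add_zero]
      · have h2 := s.add_right 0 c a (s.zero_lt hc)
        rwa [zero_add, add_comm] at h2

lemma coeff_initialForm [CommSemiring k] (w : Fin n → ℝ) (f : MvPolynomial (Fin n) k)
    (β : Fin n →₀ ℕ) :
    coeff β (initialForm w f) =
      if ∀ γ ∈ f.support, wt w γ ≤ wt w β then coeff β f else 0 := by
  classical
  rw [initialForm, coeff_sum]
  simp_rw [coeff_monomial]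
  rw [Finset.sum_ite_eq' (f.support.filter fun α => ∀ β ∈ f.support, wt w β ≤ wt w α) β
    (fun α => coeff α f)]
  by_cases h : ∀ γ ∈ f.support, wt w γ ≤ wt w β
  · rw [if_pos h]
    by_cases hβ : β ∈ f.support
    · rw [if_pos (Finset.mem_filter.mpr ⟨hβ, h⟩)]
    · rw [if_neg (fun hc => hβ (Finset.mem_filter.mp hc).1),
        MvPolynomial.notMem_support_iff.mp hβ]
  · rw [if_neg h, if_neg (fun hc => h (Finset.mem_filter.mp hc).2)]

lemma mem_support_initialForm [CommSemiring k] {w : Fin n → ℝ} {f : MvPolynomial (Fin n) k}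
    {β : Fin n →₀ ℕ} :
    β ∈ (initialForm w f).support ↔
      β ∈ f.support ∧ ∀ γ ∈ f.support, wt w γ ≤ wt w β := by
  rw [MvPolynomial.mem_support_iff, coeff_initialForm]
  by_cases h : ∀ γ ∈ f.support, wt w γ ≤ wt w β
  · rw [if_pos h]
    exact ⟨fun hc => ⟨MvPolynomial.mem_support_iff.mpr hc, h⟩,
      fun hc => MvPolynomial.mem_support_iff.mp hc.1⟩
  · rw [if_neg h]
    exact ⟨fun hc => absurd rfl hc, fun hc => absurd hc.2 h⟩

/-- The `w`-weight-`c` homogeneous component of a polynomial. -/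
noncomputable def wcomp [CommSemiring k] (w : Fin n → ℝ) (c : ℝ)
    (f : MvPolynomial (Fin n) k) : MvPolynomial (Fin n) k :=
  ∑ α ∈ f.support.filter (fun α => wt w α = c), monomial α (coeff α f)

lemma coeff_wcomp [CommSemiring k] (w : Fin n → ℝ) (c : ℝ) (f : MvPolynomial (Fin n) k)
    (β : Fin n →₀ ℕ) :
    coeff β (wcomp w c f) = if wt w β = c then coeff β f else 0 := by
  classical
  rw [wcomp, coeff_sum]
  simp_rw [coeff_monomial]
  rw [Finset.sum_ite_eq' (f.support.filter fun α => wt w α = c) β (fun α => coeff α f)]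
  by_cases h : wt w β = c
  · rw [if_pos h]
    by_cases hβ : β ∈ f.support
    · rw [if_pos (Finset.mem_filter.mpr ⟨hβ, h⟩)]
    · rw [if_neg (fun hc => hβ (Finset.mem_filter.mp hc).1),
        MvPolynomial.notMem_support_iff.mp hβ]
  · rw [if_neg h,
      if_neg (show β ∉ Finset.filter (fun α => wt w α = c) f.support from
        fun hc => h (Finset.mem_filter.mp hc).2)]

lemma wcomp_zero [CommSemiring k] (w : Fin n → ℝ) (c : ℝ) :
    wcomp w c (0 : MvPolynomial (Fin n) k) = 0 := by
  ext β
  rw [coeff_wcomp]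
  simp

lemma wcomp_add [CommSemiring k] (w : Fin n → ℝ) (c : ℝ) (f g : MvPolynomial (Fin n) k) :
    wcomp w c (f + g) = wcomp w c f + wcomp w c g := by
  ext β
  simp only [coeff_wcomp, coeff_add]
  split_ifs <;> simp

lemma wcomp_sub [CommRing k] (w : Fin n → ℝ) (c : ℝ) (f g : MvPolynomial (Fin n) k) :
    wcomp w c (f - g) = wcomp w c f - wcomp w c g := by
  ext β
  simp only [coeff_wcomp, coeff_sub]
  split_ifs <;> simp

lemma wcomp_sum [CommSemiring k] (w : Fin n → ℝ) (c : ℝ) {ι : Type*} (s : Finset ι)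
    (f : ι → MvPolynomial (Fin n) k) :
    wcomp w c (∑ i ∈ s, f i) = ∑ i ∈ s, wcomp w c (f i) := by
  classical
  induction s using Finset.induction with
  | empty => simp [wcomp_zero]
  | @insert i s hi ih => rw [Finset.sum_insert hi, Finset.sum_insert hi, wcomp_add, ih]

lemma wcomp_monomial_mul [CommSemiring k] (w : Fin n → ℝ) (c : ℝ) (σ : Fin n →₀ ℕ) (a : k)
    (f : MvPolynomial (Fin n) k) :
    wcomp w c (monomial σ a * f) = monomial σ a * wcomp w (c - wt w σ) f := by
  ext β
  rw [coeff_wcomp, coeff_monomial_mul', coeff_monomial_mul', coeff_wcomp]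
  by_cases h : σ ≤ β
  · have hwt : wt w β = wt w σ + wt w (β - σ) := by
      conv_lhs => rw [← add_tsub_cancel_of_le h]
      rw [wt_add]
    have hiff : wt w β = c ↔ wt w (β - σ) = c - wt w σ := by
      rw [hwt]; constructor <;> intro h' <;> linarith
    by_cases h2 : wt w β = c
    · rw [if_pos h2, if_pos h, if_pos h, if_pos (hiff.mp h2)]
    · rw [if_neg h2, if_pos h, if_neg (fun hr => h2 (hiff.mpr hr)), mul_zero]
  · rw [if_neg h, if_neg h, ite_self]

/-- Membership in the span of lead terms gives divisibility of every exponent. -/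
lemma mem_span_leadTerm_div [CommSemiring k] (s : TermOrder n)
    (G : Finset (MvPolynomial (Fin n) k)) (hG : ∀ g ∈ G, g ≠ 0)
    {q : MvPolynomial (Fin n) k}
    (hq : q ∈ Ideal.span ((fun g => s.leadTerm g) '' (G : Set (MvPolynomial (Fin n) k)))) :
    ∀ β ∈ q.support, ∃ g ∈ G, s.leadExp g ≤ β := by
  classical
  refine Submodule.span_induction ?_ ?_ ?_ ?_ hq
  · rintro p ⟨g, hg, rfl⟩ β hβ
    simp only [TermOrder.leadTerm] at hβ
    rw [MvPolynomial.mem_support_iff, coeff_monomial] at hβ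
    have heq : s.leadExp g = β := by
      by_contra hne
      rw [if_neg hne] at hβ
      exact hβ rfl
    exact ⟨g, hg, heq ▸ le_refl _⟩
  · intro β hβ
    simp at hβ
  · intro x y hx hy ihx ihy β hβ
    rcases Finset.mem_union.mp (MvPolynomial.support_add hβ) with h | h
    · exact ihx β h
    · exact ihy β h
  · intro a x hx ihx β hβ
    rw [smul_eq_mul] at hβ
    obtain ⟨γ, hγ, δ, hδ, rfl⟩ := Finset.mem_add.mp (MvPolynomial.support_mul a x hβ)
    obtain ⟨g, hg, hle⟩ := ihx δ hδ
    exact ⟨g, hg, hle.trans le_add_self⟩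

end AuxDevelopment

section AuxDevelopment2

open MvPolynomial

variable {n : ℕ} {k : Type*}

/-- Key consequence of `ω` lying in the closure of the Gröbner cone of `t`:
the initial form of any nonzero element of `I` contains an exponent divisible by
the lead exponent of some element of `H`. -/
lemma key_div [Field k] (t : TermOrder n) (I : Ideal (MvPolynomial (Fin n) k))
    (H : Finset (MvPolynomial (Fin n) k)) (hH : IsGroebnerBasis t I H)
    (h0 : (0 : MvPolynomial (Fin n) k) ∉ H) (ωr : Fin n → ℝ)
    (hcone : ωr ∈ closure {v : Fin n → ℝ |
        (∀ i, 0 ≤ v i) ∧ initialIdealW v I = initialIdealT t I})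
    {f : MvPolynomial (Fin n) k} (hf : f ∈ I) (hf0 : f ≠ 0) :
    ∃ δ ∈ (initialForm ωr f).support, ∃ h ∈ H, t.leadExp h ≤ δ := by
  classical
  obtain ⟨v, hvS, hvlim⟩ := mem_closure_iff_seq_limit.mp hcone
  have hsupp : f.support.Nonempty := by
    rwa [Finset.nonempty_iff_ne_empty, Ne, MvPolynomial.support_eq_empty]
  have hmax : ∀ j : ℕ, ∃ δ ∈ f.support, (∀ γ ∈ f.support, wt (v j) γ ≤ wt (v j) δ) ∧
      ∃ h ∈ H, t.leadExp h ≤ δ := by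
    intro j
    obtain ⟨δ, hδ, hδmax⟩ := f.support.exists_max_image (fun α => wt (v j) α) hsupp
    refine ⟨δ, hδ, hδmax, ?_⟩
    have hmem : initialForm (v j) f ∈
        Ideal.span ((fun g => t.leadTerm g) '' (H : Set (MvPolynomial (Fin n) k))) := by
      rw [hH.2, ← (hvS j).2]
      exact Ideal.subset_span ⟨f, hf, hf0, rfl⟩
    have hδ' : δ ∈ (initialForm (v j) f).support :=
      mem_support_initialForm.mpr ⟨hδ, hδmax⟩
    exact mem_span_leadTerm_div t H (fun h hh he => h0 (he ▸ hh)) hmem δ hδ'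
  choose D hD1 hD2 hD3 using hmax
  -- pigeonhole: some exponent is chosen infinitely often
  have hpig : ∃ δ ∈ f.support, ∀ N : ℕ, ∃ j, N ≤ j ∧ D j = δ := by
    by_contra hcon
    push_neg at hcon
    choose N hN using hcon
    set N0 : ℕ := f.support.attach.sup (fun x => N x.1 x.2) with hN0
    exact hN (D N0) (hD1 N0) N0
      (Finset.le_sup (f := fun x => N x.1 x.2) (Finset.mem_attach _ ⟨D N0, hD1 N0⟩)) rfl
  obtain ⟨δ, hδf, hfreq⟩ := hpig
  obtain ⟨j0, _, hj0⟩ := hfreq 0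
  refine ⟨δ, ?_, ?_⟩
  · refine mem_support_initialForm.mpr ⟨hδf, ?_⟩
    intro γ hγ
    by_contra hlt
    push_neg at hlt
    have htend : Filter.Tendsto (fun j => wt (v j) δ - wt (v j) γ) Filter.atTop
        (nhds (wt ωr δ - wt ωr γ)) := by
      have hco : ∀ β : Fin n →₀ ℕ, Filter.Tendsto (fun j => wt (v j) β) Filter.atTop
          (nhds (wt ωr β)) := by
        intro β
        apply tendsto_finset_sum
        intro i _
        exact (Filter.Tendsto.mul_const _ ((tendsto_pi_nhds.mp hvlim) i))
      exact (hco δ).sub (hco γ)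
    have hev := htend.eventually_lt_const (by linarith : wt ωr δ - wt ωr γ < 0)
    have hfr : ∃ᶠ j in Filter.atTop, (0 : ℝ) ≤ wt (v j) δ - wt (v j) γ := by
      rw [Filter.frequently_atTop]
      intro a
      obtain ⟨j, hja, hjD⟩ := hfreq a
      refine ⟨j, hja, ?_⟩
      have := hD2 j γ hγ
      rw [hjD] at this
      linarith
    obtain ⟨j, hj1, hj2⟩ := (hfr.and_eventually hev).exists
    linarith
  · have := hD3 j0
    rwa [hj0] at this

/-- The initial ideal `in_ω(I)` is closed under taking weight-homogeneous components. -/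
lemma wcomp_mem_initialIdealW [CommRing k] (ωr : Fin n → ℝ)
    (I : Ideal (MvPolynomial (Fin n) k)) {p : MvPolynomial (Fin n) k}
    (hp : p ∈ initialIdealW ωr I) :
    ∀ c : ℝ, wcomp ωr c p ∈ initialIdealW ωr I := by
  classical
  refine Submodule.span_induction ?_ ?_ ?_ ?_ hp
  · rintro q ⟨f, hf, hf0, rfl⟩ c
    by_cases hall : ∀ β ∈ (initialForm ωr f).support, wt ωr β = c
    · have heq : wcomp ωr c (initialForm ωr f) = initialForm ωr f := by
        ext β
        rw [coeff_wcomp]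
        split_ifs with h
        · rfl
        · by_cases hβ : β ∈ (initialForm ωr f).support
          · exact absurd (hall β hβ) h
          · exact (MvPolynomial.notMem_support_iff.mp hβ).symm
      rw [heq]
      exact Ideal.subset_span ⟨f, hf, hf0, rfl⟩
    · push_neg at hall
      obtain ⟨β₀, hβ₀, hβ₀c⟩ := hall
      have heq : wcomp ωr c (initialForm ωr f) = 0 := by
        ext β
        rw [coeff_wcomp, coeff_zero]
        split_ifs with h
        · by_cases hβ : β ∈ (initialForm ωr f).support
          · exfalso
            obtain ⟨hβf, hβmax⟩ := mem_support_initialForm.mp hβ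
            obtain ⟨hβ₀f, hβ₀max⟩ := mem_support_initialForm.mp hβ₀
            have heqw : wt ωr β = wt ωr β₀ := le_antisymm (hβ₀max β hβf) (hβmax β₀ hβ₀f)
            exact hβ₀c (heqw ▸ h)
          · exact MvPolynomial.notMem_support_iff.mp hβ
        · rfl
      rw [heq]
      exact Ideal.zero_mem _
  · intro c
    rw [wcomp_zero]
    exact Ideal.zero_mem _
  · intro x y hx hy ihx ihy c
    rw [wcomp_add]
    exact Ideal.add_mem _ (ihx c) (ihy c)
  · intro a x hx ihx c
    have hrw : wcomp ωr c (a • x) =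
        ∑ σ ∈ a.support, monomial σ (coeff σ a) * wcomp ωr (c - wt ωr σ) x := by
      rw [smul_eq_mul]
      conv_lhs => rw [← a.support_sum_monomial_coeff]
      rw [Finset.sum_mul, wcomp_sum]
      exact Finset.sum_congr rfl fun σ _ => wcomp_monomial_mul _ _ _ _ _
    rw [hrw]
    exact Ideal.sum_mem _ fun σ _ => Ideal.mul_mem_left _ _ (ihx _)

/-- Decomposition: weight components of elements of `in_ω(I)` are weight components
of elements of `I` with controlled support. -/
lemma exists_wcomp_rep [CommRing k] (ωr : Fin n → ℝ)
    (I : Ideal (MvPolynomial (Fin n) k)) {p : MvPolynomial (Fin n) k}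
    (hp : p ∈ initialIdealW ωr I) :
    ∀ c : ℝ, ∃ f, f ∈ I ∧ wcomp ωr c p = wcomp ωr c f ∧
      ∀ β ∈ f.support, wt ωr β ≤ c := by
  classical
  refine Submodule.span_induction ?_ ?_ ?_ ?_ hp
  · rintro q ⟨f, hf, hf0, rfl⟩ c
    by_cases hc : wcomp ωr c (initialForm ωr f) = 0
    · exact ⟨0, Ideal.zero_mem _, by rw [hc, wcomp_zero], by simp⟩
    · have hne : ∃ β₀ ∈ (initialForm ωr f).support, wt ωr β₀ = c := by
        by_contra hcon
        push_neg at hcon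
        apply hc
        ext β
        rw [coeff_wcomp, coeff_zero]
        split_ifs with h
        · by_cases hβ : β ∈ (initialForm ωr f).support
          · exact absurd (h) (hcon β hβ)
          · exact MvPolynomial.notMem_support_iff.mp hβ
        · rfl
      obtain ⟨β₀, hβ₀, hβ₀c⟩ := hne
      have hmax : ∀ γ ∈ f.support, wt ωr γ ≤ c :=
        fun γ hγ => hβ₀c ▸ (mem_support_initialForm.mp hβ₀).2 γ hγ
      refine ⟨f, hf, ?_, hmax⟩
      ext β
      rw [coeff_wcomp, coeff_wcomp, coeff_initialForm]
      by_cases h1 : wt ωr β = c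
      · rw [if_pos h1, if_pos h1, if_pos (fun γ hγ => by rw [h1]; exact hmax γ hγ)]
      · rw [if_neg h1, if_neg h1]
  · intro c
    exact ⟨0, Ideal.zero_mem _, rfl, by simp⟩
  · intro x y hx hy ihx ihy c
    obtain ⟨fx, hfx, hfx2, hfx3⟩ := ihx c
    obtain ⟨fy, hfy, hfy2, hfy3⟩ := ihy c
    refine ⟨fx + fy, Ideal.add_mem _ hfx hfy, by rw [wcomp_add, wcomp_add, hfx2, hfy2], ?_⟩
    intro β hβ
    rcases Finset.mem_union.mp (MvPolynomial.support_add hβ) with h | h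
    · exact hfx3 β h
    · exact hfy3 β h
  · intro a x hx ihx c
    choose F hF1 hF2 hF3 using ihx
    refine ⟨∑ σ ∈ a.support, monomial σ (coeff σ a) * F (c - wt ωr σ),
      Ideal.sum_mem _ fun σ _ => Ideal.mul_mem_left _ _ (hF1 _), ?_, ?_⟩
    · rw [smul_eq_mul]
      conv_lhs => rw [← a.support_sum_monomial_coeff]
      rw [Finset.sum_mul, wcomp_sum, wcomp_sum]
      refine Finset.sum_congr rfl fun σ _ => ?_
      rw [wcomp_monomial_mul, wcomp_monomial_mul, hF2]
    · intro β hβ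
      obtain ⟨σ, hσ, hβσ⟩ := Finset.mem_biUnion.mp (MvPolynomial.support_sum hβ)
      obtain ⟨γ, hγ, δ, hδ, rfl⟩ := Finset.mem_add.mp (MvPolynomial.support_mul _ _ hβσ)
      have hγσ : γ = σ := Finset.mem_singleton.mp (MvPolynomial.support_monomial_subset hγ)
      subst hγσ
      have := hF3 (c - wt ωr γ) δ hδ
      rw [wt_add]
      linarith

/-- A nonzero homogeneous element of `in_ω(I)` is the initial form of an element of `I`. -/
lemma homog_eq_initialForm [CommRing k] (ωr : Fin n → ℝ)
    (I : Ideal (MvPolynomial (Fin n) k)) {p : MvPolynomial (Fin n) k}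
    (hp : p ∈ initialIdealW ωr I) (hp0 : p ≠ 0) {c : ℝ}
    (hc : ∀ β ∈ p.support, wt ωr β = c) :
    ∃ f, f ∈ I ∧ f ≠ 0 ∧ initialForm ωr f = p := by
  obtain ⟨f, hfI, hfc, hfle⟩ := exists_wcomp_rep ωr I hp c
  have hp' : wcomp ωr c p = p := by
    ext β
    rw [coeff_wcomp]
    split_ifs with h
    · rfl
    · by_cases hβ : β ∈ p.support
      · exact absurd (hc β hβ) h
      · exact (MvPolynomial.notMem_support_iff.mp hβ).symm
  have hfc' : wcomp ωr c f = p := by rw [← hfc, hp']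
  have hf0 : f ≠ 0 := by
    rintro rfl
    rw [wcomp_zero] at hfc'
    exact hp0 hfc'.symm
  refine ⟨f, hfI, hf0, ?_⟩
  obtain ⟨β₀, hβ₀p⟩ := MvPolynomial.ne_zero_iff.mp hp0
  have hβ₀f : β₀ ∈ f.support ∧ wt ωr β₀ = c := by
    have := hβ₀p
    rw [← hfc', coeff_wcomp] at this
    by_cases h : wt ωr β₀ = c
    · rw [if_pos h] at this
      exact ⟨MvPolynomial.mem_support_iff.mpr this, h⟩
    · rw [if_neg h] at this
      exact absurd rfl this
  rw [← hfc']
  ext β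
  rw [coeff_initialForm, coeff_wcomp]
  by_cases h1 : ∀ γ ∈ f.support, wt ωr γ ≤ wt ωr β
  · rw [if_pos h1]
    by_cases h2 : wt ωr β = c
    · rw [if_pos h2]
    · rw [if_neg h2]
      by_cases hβ : β ∈ f.support
      · exact absurd (le_antisymm (hβ₀f.2 ▸ hfle β hβ) (hβ₀f.2 ▸ h1 β₀ hβ₀f.1)) h2
      · exact MvPolynomial.notMem_support_iff.mp hβ
  · rw [if_neg h1]
    by_cases h2 : wt ωr β = c
    · rw [if_pos h2]
      by_cases hβ : β ∈ f.support
      · exact absurd (fun γ hγ => h2 ▸ hfle γ hγ) h1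
      · exact (MvPolynomial.notMem_support_iff.mp hβ).symm
    · rw [if_neg h2]

/-- Every nonzero homogeneous element of `in_ω(I)` has an `H`-divisible exponent. -/
lemma homog_div [Field k] (t : TermOrder n) (I : Ideal (MvPolynomial (Fin n) k))
    (H : Finset (MvPolynomial (Fin n) k)) (hH : IsGroebnerBasis t I H)
    (h0 : (0 : MvPolynomial (Fin n) k) ∉ H) (ωr : Fin n → ℝ)
    (hcone : ωr ∈ closure {v : Fin n → ℝ |
        (∀ i, 0 ≤ v i) ∧ initialIdealW v I = initialIdealT t I})
    {p : MvPolynomial (Fin n) k} (hp : p ∈ initialIdealW ωr I) (hp0 : p ≠ 0)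
    {c : ℝ} (hc : ∀ β ∈ p.support, wt ωr β = c) :
    ∃ δ ∈ p.support, ∃ h ∈ H, t.leadExp h ≤ δ := by
  obtain ⟨f, hfI, hf0, hfp⟩ := homog_eq_initialForm ωr I hp hp0 hc
  obtain ⟨δ, hδ, hdiv⟩ := key_div t I H hH h0 ωr hcone hfI hf0
  exact ⟨δ, hfp ▸ hδ, hdiv⟩

/-- The lead term w.r.t. a weight-refinement order is unchanged by taking initial forms. -/
lemma leadTerm_initialForm [CommSemiring k] {w : Fin n → ℝ} (t' t'' : TermOrder n)
    (ht'' : t''.lt = refineLt w t') {f : MvPolynomial (Fin n) k} (hf : f ≠ 0) :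
    t''.leadTerm (initialForm w f) = t''.leadTerm f := by
  have hα := t''.isLeadExp_leadExp hf
  set α := t''.leadExp f with hαdef
  have hmaxwt : ∀ γ ∈ f.support, wt w γ ≤ wt w α := by
    intro γ hγ
    by_cases h : γ = α
    · rw [h]
    · have := hα.2 γ hγ h
      rw [ht''] at this
      rcases this with h' | h'
      · exact le_of_lt h'
      · exact le_of_eq h'.1
  have hαin : t''.IsLeadExp (initialForm w f) α := by
    constructor
    · exact mem_support_initialForm.mpr ⟨hα.1, hmaxwt⟩
    · intro β hβ hne
      exact hα.2 β (mem_support_initialForm.mp hβ).1 hne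
  have hcoeff : coeff α (initialForm w f) = coeff α f := by
    rw [coeff_initialForm, if_pos hmaxwt]
  simp only [TermOrder.leadTerm]
  rw [t''.leadExp_eq hαin, hcoeff]

end AuxDevelopment2

/-- In the setting of the lifting lemma, each lifted element
`m - nf_H(m)` has the same `t''`-leading term as `m`. -/
theorem lift_leadTerm_eq {k : Type*} [Field k] (t t' t'' : TermOrder n)
    (I : Ideal (MvPolynomial (Fin n) k)) (H : Finset (MvPolynomial (Fin n) k))
    (hH : IsGroebnerBasis t I H) (h0 : (0 : MvPolynomial (Fin n) k) ∉ H)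
    (ω : Fin n → ℚ) (hω : ∀ i, 0 ≤ ω i)
    (ωr : Fin n → ℝ) (hωr : ωr = fun i => (ω i : ℝ))
    (hcone : ωr ∈ closure {v : Fin n → ℝ |
        (∀ i, 0 ≤ v i) ∧ initialIdealW v I = initialIdealT t I})
    (ht'' : t''.lt = refineLt ωr t')
    (M : Finset (MvPolynomial (Fin n) k))
    (hM : IsReducedGB t'' (initialIdealW ωr I) M)
    (nf : MvPolynomial (Fin n) k → MvPolynomial (Fin n) k)
    (hnf : ∀ m ∈ M, m - nf m ∈ I ∧
        ∀ α ∈ (nf m).support, ∀ h ∈ H, ¬ t.leadExp h ≤ α) :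
    ∀ m ∈ M, t''.leadTerm (m - nf m) = t''.leadTerm m := by
  classical
  intro m hm
  have hwin : ∀ i, 0 ≤ ωr i := by
    intro i
    simp only [hωr]
    exact_mod_cast hω i
  have hmJ : m ∈ initialIdealW ωr I := hM.1.1 m hm
  have hmonic := hM.2.1 m hm
  have hm0 : m ≠ 0 := by
    intro h
    rw [h] at hmonic
    simp at hmonic
  obtain ⟨hnf1, hnf2⟩ := hnf m hm
  set α := t''.leadExp m with hαdef
  have hαlead : t''.IsLeadExp m α := t''.isLeadExp_leadExp hm0
  set W := wt ωr α with hWdef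
  have hMne : ∀ g ∈ M, g ≠ 0 := by
    intro g hg h
    have := hM.2.1 g hg
    rw [h] at this
    simp at this
  have hαmax : ∀ γ ∈ m.support, wt ωr γ ≤ W := by
    intro γ hγ
    by_cases h : γ = α
    · rw [h]
    · have := hαlead.2 γ hγ h
      rw [ht''] at this
      rcases this with h' | h'
      · exact le_of_lt h'
      · exact le_of_eq h'.1
  -- Step 1: m is ωr-homogeneous of weight W
  have hhomog : ∀ γ ∈ m.support, wt ωr γ = W := by
    by_contra hcon
    push_neg at hcon
    obtain ⟨γ₀, hγ₀, hγ₀W⟩ := hcon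
    set mlow := m - wcomp ωr W m with hmlowdef
    have hmlowJ : mlow ∈ initialIdealW ωr I :=
      Ideal.sub_mem _ hmJ (wcomp_mem_initialIdealW ωr I hmJ W)
    have hcoefflow : ∀ β, coeff β mlow = if wt ωr β = W then 0 else coeff β m := by
      intro β
      rw [hmlowdef, coeff_sub, coeff_wcomp]
      split_ifs with h <;> ring
    have hlow0 : mlow ≠ 0 := by
      intro h
      have h2 := hcoefflow γ₀
      rw [h, coeff_zero, if_neg hγ₀W] at h2
      exact (MvPolynomial.mem_support_iff.mp hγ₀) h2.symm
    have hsupplow : mlow.support ⊆ m.support := by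
      intro β hβ
      rw [MvPolynomial.mem_support_iff, hcoefflow] at hβ
      rw [MvPolynomial.mem_support_iff]
      split_ifs at hβ with h
      · exact absurd rfl hβ
      · exact hβ
    set μ := t''.leadExp mlow with hμdef
    have hμlead := t''.isLeadExp_leadExp hlow0
    have hμdiv : ∃ g ∈ M, t''.leadExp g ≤ μ := by
      have hmem : t''.leadTerm mlow ∈
          Ideal.span ((fun g => t''.leadTerm g) '' (M : Set (MvPolynomial (Fin n) k))) := by
        rw [hM.1.2]
        exact Ideal.subset_span ⟨mlow, hmlowJ, hlow0, rfl⟩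
      exact mem_span_leadTerm_div t'' M hMne hmem μ
        (t''.leadExp_mem_support_leadTerm hlow0)
    obtain ⟨m₅, hm₅M, hm₅le⟩ := hμdiv
    have hμm : μ ∈ m.support := hsupplow hμlead.1
    have hαns : coeff α mlow = 0 := by
      rw [hcoefflow, if_pos rfl]
    have hαμ : α ≠ μ := by
      intro he
      refine (MvPolynomial.mem_support_iff.mp hμlead.1) ?_
      rw [← hμdef, ← he]
      exact hαns
    by_cases h5 : m₅ = m
    · rw [h5] at hm₅le
      rcases refine_le_imp hwin t' hm₅le with he | hl
      · exact hαμ he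
      · have hl' : t''.lt α μ := by rw [ht'']; exact hl
        have hl2 : t''.lt μ α := hαlead.2 μ hμm (fun he => hαμ he.symm)
        exact t''.irrefl α (t''.trans _ _ _ hl' hl2)
    · exact hM.2.2.1 m hm m₅ hm₅M (fun he => h5 he.symm) μ hμm hm₅le
  -- Step 2: g := m - nf m is nonzero
  set g := m - nf m with hgdef
  have hg0 : g ≠ 0 := by
    intro h
    have hnfm : nf m = m := by
      rw [hgdef] at h
      exact (sub_eq_zero.mp h).symm
    obtain ⟨δ, hδ, hh, hhH, hdiv⟩ := homog_div t I H hH h0 ωr hcone hmJ hm0 hhomog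
    refine hnf2 δ ?_ hh hhH hdiv
    rw [hnfm]
    exact hδ
  have hgI : g ∈ I := hnf1
  -- Step 3: the maximal-weight part of g is m
  obtain ⟨δ, hδ, h1, h1H, h1div⟩ := key_div t I H hH h0 ωr hcone hgI hg0
  obtain ⟨hδg, hδmax⟩ := mem_support_initialForm.mp hδ
  have hδnf : δ ∉ (nf m).support := fun hh => hnf2 δ hh h1 h1H h1div
  have hδm : δ ∈ m.support := by
    have h2 := MvPolynomial.mem_support_iff.mp hδg
    rw [hgdef, coeff_sub, MvPolynomial.notMem_support_iff.mp hδnf, sub_zero] at h2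
    exact MvPolynomial.mem_support_iff.mpr h2
  have hδW : wt ωr δ = W := hhomog δ hδm
  have hgmax : ∀ γ ∈ g.support, wt ωr γ ≤ W := fun γ hγ => hδW ▸ hδmax γ hγ
  have hiFg : initialForm ωr g = wcomp ωr W g := by
    ext β
    rw [coeff_initialForm, coeff_wcomp]
    by_cases h1' : ∀ γ ∈ g.support, wt ωr γ ≤ wt ωr β
    · rw [if_pos h1']
      by_cases h2' : wt ωr β = W
      · rw [if_pos h2']
      · rw [if_neg h2']
        by_cases hβ : β ∈ g.support
        · exact absurd (le_antisymm (hgmax β hβ) (hδW ▸ h1' δ hδg)) h2'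
        · exact MvPolynomial.notMem_support_iff.mp hβ
    · rw [if_neg h1']
      by_cases h2' : wt ωr β = W
      · rw [if_pos h2']
        by_cases hβ : β ∈ g.support
        · exact absurd (fun γ hγ => h2' ▸ hgmax γ hγ) h1'
        · exact (MvPolynomial.notMem_support_iff.mp hβ).symm
      · rw [if_neg h2']
  have hwm : wcomp ωr W m = m := by
    ext β
    rw [coeff_wcomp]
    split_ifs with h
    · rfl
    · by_cases hβ : β ∈ m.support
      · exact absurd (hhomog β hβ) h
      · exact (MvPolynomial.notMem_support_iff.mp hβ).symm
  have hr : wcomp ωr W (nf m) = m - initialForm ωr g := by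
    rw [hiFg, hgdef, wcomp_sub, hwm]
    ring
  have hrJ : wcomp ωr W (nf m) ∈ initialIdealW ωr I := by
    rw [hr]
    exact Ideal.sub_mem _ hmJ (Ideal.subset_span ⟨g, hgI, hg0, rfl⟩)
  have hr0 : wcomp ωr W (nf m) = 0 := by
    by_contra hr0
    have hrc : ∀ β ∈ (wcomp ωr W (nf m)).support, wt ωr β = W := by
      intro β hβ
      rw [MvPolynomial.mem_support_iff, coeff_wcomp] at hβ
      split_ifs at hβ with h
      · exact h
      · exact absurd rfl hβ
    obtain ⟨δ', hδ', hh', hhH', hdiv'⟩ := homog_div t I H hH h0 ωr hcone hrJ hr0 hrc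
    have hδ'nf : δ' ∈ (nf m).support := by
      rw [MvPolynomial.mem_support_iff, coeff_wcomp] at hδ'
      rw [MvPolynomial.mem_support_iff]
      split_ifs at hδ' with h
      · exact hδ'
      · exact absurd rfl hδ'
    exact hnf2 δ' hδ'nf hh' hhH' hdiv'
  have hiFm : initialForm ωr g = m := by
    rw [hr0] at hr
    have := sub_eq_zero.mp hr.symm
    exact this.symm
  rw [← leadTerm_initialForm t' t'' ht'' hg0, hiFm]
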